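/- For jointly distributed discrete random variables X and Y with joint pmf p(x,y), marginals p(x), p(y), and any variational conditional distribution q(y|x) (with q(y|x) > 0 wherever p(x,y) > 0), the mutual information satisfies the variational lower bound I(X;Y) ≥ H(Y) + E_{p(x,y)}[log q(y|x)], where H(Y) is the Shannon entropy of Y. -/

import Mathlib

open Real

/-- variational lower bound on mutual information:
`I(X;Y) ≥ H(Y) + E_{p(x,y)}[log q(y|x)]`. -/
theorem mutual_info_variational_lower_bound
    {X Y : Type} [Fintype X] [Fintype Y]
    (p : X → Y → ℝ) (q : X → Y → ℝ)
    (hp_nonneg : ∀ x y, 0 ≤ p x y)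
    (hp_sum : ∑ x, ∑ y, p x y = 1)
    (hq_nonneg : ∀ x y, 0 ≤ q x y)
    (hq_sum : ∀ x, ∑ y, q x y = 1)
    (hq_pos : ∀ x y, 0 < p x y → 0 < q x y)
    (pX : X → ℝ) (hpX : ∀ x, pX x = ∑ y, p x y)
    (pY : Y → ℝ) (hpY : ∀ y, pY y = ∑ x, p x y)
    (I HY : ℝ)
    (hI : I = ∑ x, ∑ y, p x y * Real.log (p x y / (pX x * pY y)))
    (hHY : HY = -∑ y, pY y * Real.log (pY y)) :
    I ≥ HY + ∑ x, ∑ y, p x y * Real.log (q x y) := by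
  subst hI hHY
  have hpX_nonneg : ∀ x, 0 ≤ pX x := fun x =>
    (hpX x) ▸ Finset.sum_nonneg (fun y _ => hp_nonneg x y)
  have hpXge : ∀ x y, p x y ≤ pX x := fun x y =>
    (hpX x) ▸ Finset.single_le_sum (fun y _ => hp_nonneg x y) (Finset.mem_univ y)
  have hpYge : ∀ x y, p x y ≤ pY y := fun x y =>
    (hpY y) ▸ Finset.single_le_sum (fun x _ => hp_nonneg x y) (Finset.mem_univ x)
  -- rewrite HY as a double sum
  have hHY2 : -∑ y, pY y * Real.log (pY y)
      = ∑ x, ∑ y, -(p x y * Real.log (pY y)) := by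
    rw [Finset.sum_comm]
    rw [← Finset.sum_neg_distrib]
    refine Finset.sum_congr rfl (fun y _ => ?_)
    rw [show (∑ x, -(p x y * Real.log (pY y))) = -∑ x, p x y * Real.log (pY y) from Finset.sum_neg_distrib _, hpY y, Finset.sum_mul]
  rw [hHY2, ← Finset.sum_add_distrib]
  have hterm : ∀ x y,
      p x y * Real.log (p x y / (pX x * pY y))
        - ((-(p x y * Real.log (pY y))) + p x y * Real.log (q x y))
      ≥ p x y - pX x * q x y := by
    intro x y
    rcases eq_or_lt_of_le (hp_nonneg x y) with h0 | hpos
    · have h0 : p x y = 0 := h0.symm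
      rw [h0]
      simp
      exact mul_nonneg (hpX_nonneg x) (hq_nonneg x y)
    · have hq := hq_pos x y hpos
      have hX : 0 < pX x := lt_of_lt_of_le hpos (hpXge x y)
      have hY : 0 < pY y := lt_of_lt_of_le hpos (hpYge x y)
      have h1 : Real.log (pX x * q x y / p x y) ≤ pX x * q x y / p x y - 1 :=
        Real.log_le_sub_one_of_pos (by positivity)
      rw [Real.log_div (by positivity) (by positivity), Real.log_mul (ne_of_gt hX) (ne_of_gt hq)] at h1
      rw [Real.log_div (ne_of_gt hpos) (by positivity), Real.log_mul (ne_of_gt hX) (ne_of_gt hY)]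
      have h2 := mul_le_mul_of_nonneg_left h1 hpos.le
      have h3 : p x y * (pX x * q x y / p x y) = pX x * q x y := by
        field_simp
      nlinarith [h2, h3]
  have hsum0 : ∑ x, ∑ y, (p x y - pX x * q x y) = 0 := by
    have : ∀ x, ∑ y, (p x y - pX x * q x y) = (∑ y, p x y) - pX x := by
      intro x
      rw [Finset.sum_sub_distrib, ← Finset.mul_sum, hq_sum x, mul_one]
    simp only [this]
    rw [Finset.sum_sub_distrib, hp_sum]
    simp only [hpX]
    rw [hp_sum]
    ring
  have := Finset.sum_le_sum (fun x (_ : x ∈ Finset.univ) =>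
    Finset.sum_le_sum (fun y (_ : y ∈ Finset.univ) => hterm x y))
  have hdiff : ∑ x, ∑ y, (p x y * Real.log (p x y / (pX x * pY y))
        - ((-(p x y * Real.log (pY y))) + p x y * Real.log (q x y)))
      ≥ 0 := by
    rw [← hsum0]
    exact this
  have hsplit : ∑ x, ∑ y, (p x y * Real.log (p x y / (pX x * pY y))
        - ((-(p x y * Real.log (pY y))) + p x y * Real.log (q x y)))
      = (∑ x, ∑ y, p x y * Real.log (p x y / (pX x * pY y)))
        - ∑ x, ∑ y, ((-(p x y * Real.log (pY y))) + p x y * Real.log (q x y)) := by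
    rw [← Finset.sum_sub_distrib]
    congr 1; ext x
    rw [← Finset.sum_sub_distrib]
  rw [hsplit] at hdiff
  have : ∑ x, ∑ y, ((-(p x y * Real.log (pY y))) + p x y * Real.log (q x y))
      = ∑ x, (∑ y, -(p x y * Real.log (pY y)) + ∑ y, p x y * Real.log (q x y)) := by
    congr 1; ext x
    rw [Finset.sum_add_distrib]
  rw [this] at hdiff
  linarith
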